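/- Let x₀, φ, t₀, ρ be as in the context. Then ρ is non-increasing on [t₀,∞). -/

import Mathlib

/-- The function `ρ(t) = e^{−t}·φ⁻¹(2/(√(n+1)e^t))` associated to `φ` is non-increasing
on `[t₀,∞)`, where `t₀ = ln(2/(√(n+1)φ(x₀)))`. -/
theorem rho_antitone (n : ℕ) (hn : 1 ≤ n)
    (x₀ : ℝ) (hx₀ : 1 ≤ x₀) (φ ψ : ℝ → ℝ)
    (hφpos : ∀ x ∈ Set.Ici x₀, 0 < φ x)
    (hφanti : StrictAntiOn φ (Set.Ici x₀))
    (hφcont : ContinuousOn φ (Set.Ici x₀))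
    (hφlim : Filter.Tendsto φ Filter.atTop (nhds 0))
    (hxφ : ∀ x y : ℝ, x₀ ≤ x → x ≤ y → y * φ y ≤ x * φ x)
    -- `ψ = φ⁻¹` is the inverse function of `φ`, defined on `(0, φ(x₀)]`
    (hψmem : ∀ y ∈ Set.Ioc (0 : ℝ) (φ x₀), ψ y ∈ Set.Ici x₀ ∧ φ (ψ y) = y)
    (hψφ : ∀ x ∈ Set.Ici x₀, ψ (φ x) = x) :
    AntitoneOn (fun t : ℝ => Real.exp (-t) * ψ (2 / (Real.sqrt ((n : ℝ) + 1) * Real.exp t)))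
      (Set.Ici (Real.log (2 / (Real.sqrt ((n : ℝ) + 1) * φ x₀)))) := by
  intro s hs t ht hst
  set c := Real.sqrt ((n : ℝ) + 1) with hc
  have hcpos : 0 < c := Real.sqrt_pos.mpr (by positivity)
  have hφx₀ : 0 < φ x₀ := hφpos x₀ (le_refl x₀)
  have hy : ∀ u : ℝ, Real.log (2 / (c * φ x₀)) ≤ u →
      2 / (c * Real.exp u) ∈ Set.Ioc (0 : ℝ) (φ x₀) := by
    intro u hu
    refine ⟨by positivity, ?_⟩
    have h1 : 2 / (c * φ x₀) ≤ Real.exp u := by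
      rw [← Real.exp_log (show (0:ℝ) < 2 / (c * φ x₀) by positivity)]
      exact Real.exp_le_exp.mpr hu
    rw [div_le_iff₀ (by positivity)]
    rw [div_le_iff₀ (by positivity)] at h1
    nlinarith [Real.exp_pos u]
  have hys := hy s hs
  have hyt := hy t ht
  obtain ⟨hxs, hφxs⟩ := hψmem _ hys
  obtain ⟨hxt, hφxt⟩ := hψmem _ hyt
  have hest : Real.exp s ≤ Real.exp t := Real.exp_le_exp.mpr hst
  have hyts : 2 / (c * Real.exp t) ≤ 2 / (c * Real.exp s) := by
    apply div_le_div_of_nonneg_left (by norm_num) (by positivity)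
    have := Real.exp_pos s
    nlinarith
  have hxst : ψ (2 / (c * Real.exp s)) ≤ ψ (2 / (c * Real.exp t)) := by
    by_contra h
    push_neg at h
    have := hφanti hxt hxs h
    rw [hφxs, hφxt] at this
    exact absurd hyts (not_le.mpr this)
  have key := hxφ _ _ hxs hxst
  rw [hφxs, hφxt] at key
  have h1 : Real.exp (-t) = (2 / (c * Real.exp t)) * (c / 2) := by
    rw [Real.exp_neg]
    field_simp
  have h2 : Real.exp (-s) = (2 / (c * Real.exp s)) * (c / 2) := by
    rw [Real.exp_neg]
    field_simp
  simp only
  rw [h1, h2]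
  nlinarith [key]
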